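/- With ψ(x) = -(6/π) x K₁(4πx) + 24 x² K₀(4πx), for all x ≥ 1/2 one has ∑_{d=1}^∞ ψ(dx) ≤ 9 x^{3/2} e^{-4πx}. -/

import Mathlib

open Real MeasureTheory

/-- The modified Bessel function of the second kind `K_ν(x)`, via its
integral representation `K_ν(x) = ∫₀^∞ exp(-x cosh t) cosh(ν t) dt`. -/
noncomputable def besselK (ν x : ℝ) : ℝ :=
  ∫ t in Set.Ioi (0 : ℝ), Real.exp (-x * Real.cosh t) * Real.cosh (ν * t)

/-- The function ψ from the paper. -/
noncomputable def psiFn (x : ℝ) : ℝ :=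
  -(6 / Real.pi) * x * besselK 1 (4 * Real.pi * x) +
    24 * x ^ 2 * besselK 0 (4 * Real.pi * x)

lemma cosh_ge_one_add (t : ℝ) : 1 + t ^ 2 / 2 ≤ Real.cosh t := by
  have h1 : Real.cosh t = 1 + 2 * Real.sinh (t / 2) ^ 2 := by
    have h := Real.cosh_two_mul (t / 2)
    have h2 := Real.cosh_sq (t / 2)
    rw [show 2 * (t / 2) = t by ring] at h
    nlinarith
  have h2 : (t / 2) ^ 2 ≤ Real.sinh (t / 2) ^ 2 := by
    rcases lt_trichotomy (t / 2) 0 with h | h | h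
    · have := Real.self_lt_sinh_iff.2 (by linarith : (0:ℝ) < -(t/2))
      rw [Real.sinh_neg] at this
      nlinarith
    · simp [h]
    · have := Real.self_lt_sinh_iff.2 h
      nlinarith
  nlinarith

lemma besselK_nonneg (ν z : ℝ) : 0 ≤ besselK ν z :=
  setIntegral_nonneg measurableSet_Ioi fun t _ =>
    mul_nonneg (Real.exp_nonneg _) (Real.cosh_pos _).le

lemma besselK_zero_le (z : ℝ) (hz : 0 < z) :
    besselK 0 z ≤ Real.exp (-z) * (Real.sqrt (π / (z / 2)) / 2) := by
  have hint : Integrable (fun t : ℝ => Real.exp (-z) * Real.exp (-(z / 2) * t ^ 2))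
      (volume.restrict (Set.Ioi 0)) :=
    ((integrable_exp_neg_mul_sq (by positivity : (0:ℝ) < z / 2)).const_mul _).restrict
  calc besselK 0 z ≤ ∫ t in Set.Ioi (0:ℝ), Real.exp (-z) * Real.exp (-(z / 2) * t ^ 2) := by
        refine integral_mono_of_nonneg (Filter.Eventually.of_forall fun t =>
          mul_nonneg (Real.exp_nonneg _) (Real.cosh_pos _).le)
          hint (Filter.Eventually.of_forall fun t => ?_)
        simp only [zero_mul, Real.cosh_zero, mul_one]
        rw [← Real.exp_add, Real.exp_le_exp]
        have := cosh_ge_one_add t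
        nlinarith
    _ = Real.exp (-z) * ∫ t in Set.Ioi (0:ℝ), Real.exp (-(z / 2) * t ^ 2) :=
        integral_const_mul _ _
    _ = Real.exp (-z) * (Real.sqrt (π / (z / 2)) / 2) := by rw [integral_gaussian_Ioi]

lemma besselK_one_le (z : ℝ) (hz : 1 < z) :
    besselK 1 z ≤ Real.exp (1 - z) * (Real.sqrt (π / ((z - 1) / 2)) / 2) := by
  have hint : Integrable (fun t : ℝ => Real.exp (1 - z) * Real.exp (-((z - 1) / 2) * t ^ 2))
      (volume.restrict (Set.Ioi 0)) :=
    ((integrable_exp_neg_mul_sq (by linarith : (0:ℝ) < (z - 1) / 2)).const_mul _).restrict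
  calc besselK 1 z
      ≤ ∫ t in Set.Ioi (0:ℝ), Real.exp (1 - z) * Real.exp (-((z - 1) / 2) * t ^ 2) := by
        refine integral_mono_of_nonneg (Filter.Eventually.of_forall fun t =>
          mul_nonneg (Real.exp_nonneg _) (Real.cosh_pos _).le)
          hint (Filter.Eventually.of_forall fun t => ?_)
        simp only [one_mul]
        have h1 : Real.cosh t ≤ Real.exp (Real.cosh t) := by
          linarith [Real.add_one_le_exp (Real.cosh t)]
        have h2 : Real.exp (-z * Real.cosh t) * Real.cosh t
            ≤ Real.exp ((1 - z) * Real.cosh t) := by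
          calc Real.exp (-z * Real.cosh t) * Real.cosh t
              ≤ Real.exp (-z * Real.cosh t) * Real.exp (Real.cosh t) :=
                mul_le_mul_of_nonneg_left h1 (Real.exp_nonneg _)
            _ = Real.exp ((1 - z) * Real.cosh t) := by rw [← Real.exp_add]; ring_nf
        refine h2.trans ?_
        rw [← Real.exp_add, Real.exp_le_exp]
        have := cosh_ge_one_add t
        nlinarith
    _ = Real.exp (1 - z) * ∫ t in Set.Ioi (0:ℝ), Real.exp (-((z - 1) / 2) * t ^ 2) :=
        integral_const_mul _ _
    _ = _ := by rw [integral_gaussian_Ioi]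

lemma psiFn_le (y : ℝ) (hy : (1:ℝ)/2 ≤ y) :
    psiFn y ≤ 6 * Real.sqrt 2 * (y * Real.sqrt y) * Real.exp (-(4 * π * y)) := by
  have hy0 : 0 < y := by linarith
  have hz : 0 < 4 * π * y := by positivity
  have hK1 := besselK_nonneg 1 (4 * π * y)
  have hK0 := besselK_zero_le (4 * π * y) hz
  have hs2 : Real.sqrt 2 ^ 2 = 2 := Real.sq_sqrt (by norm_num)
  have hsy : Real.sqrt y ^ 2 = y := Real.sq_sqrt hy0.le
  have hsy0 : 0 < Real.sqrt y := Real.sqrt_pos.2 hy0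
  have hs20 : 0 < Real.sqrt 2 := Real.sqrt_pos.2 (by norm_num)
  have step1 : psiFn y ≤ 24 * y ^ 2 * besselK 0 (4 * π * y) := by
    unfold psiFn
    have h6 : 0 < 6 / π := by positivity
    nlinarith [mul_nonneg (mul_nonneg h6.le hy0.le) hK1]
  have harg : π / (4 * π * y / 2) = 1 / (2 * y) := by
    rw [div_eq_div_iff (by positivity) (by positivity)]
    ring
  have hsqrt : Real.sqrt (π / (4 * π * y / 2)) = Real.sqrt 2 * Real.sqrt y / (2 * y) := by
    rw [harg, show (1:ℝ) / (2 * y) = (Real.sqrt 2 * Real.sqrt y / (2 * y)) ^ 2 by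
      rw [div_pow, mul_pow, hs2, hsy]; field_simp, Real.sqrt_sq (by positivity)]
  calc psiFn y ≤ 24 * y ^ 2 * besselK 0 (4 * π * y) := step1
    _ ≤ 24 * y ^ 2 * (Real.exp (-(4 * π * y)) * (Real.sqrt (π / (4 * π * y / 2)) / 2)) :=
        mul_le_mul_of_nonneg_left hK0 (by positivity)
    _ = 6 * Real.sqrt 2 * (y * Real.sqrt y) * Real.exp (-(4 * π * y)) := by
        rw [hsqrt]
        field_simp
        nlinarith [Real.exp_pos (-(4 * π * y)), hs2, hsy, hsy0, hs20]

lemma abs_psiFn_le (y : ℝ) (hy : (1:ℝ)/2 ≤ y) :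
    |psiFn y| ≤ (6 * Real.exp 1 / π * y + 24 * y ^ 2) * Real.exp (-(4 * π * y)) := by
  have hy0 : 0 < y := by linarith
  have hπ : (0:ℝ) < π := Real.pi_pos
  have hπ6 : (6:ℝ) ≤ 2 * π := by nlinarith [Real.pi_gt_three]
  have hz1 : (1:ℝ) < 4 * π * y := by nlinarith
  have hK1n := besselK_nonneg 1 (4 * π * y)
  have hK0n := besselK_nonneg 0 (4 * π * y)
  have hK0 := besselK_zero_le (4 * π * y) (by positivity)
  have hK1 := besselK_one_le (4 * π * y) hz1
  -- bound the sqrt factors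
  have hb0 : Real.sqrt (π / (4 * π * y / 2)) / 2 ≤ 1 := by
    have : π / (4 * π * y / 2) ≤ 1 := by
      rw [div_le_one (by positivity)]; nlinarith
    have := Real.sqrt_le_one.mpr this
    linarith
  have hb1 : Real.sqrt (π / ((4 * π * y - 1) / 2)) / 2 ≤ 1 := by
    have h5 : (5:ℝ) ≤ 4 * π * y - 1 := by nlinarith
    have : π / ((4 * π * y - 1) / 2) ≤ 4 := by
      rw [div_le_iff₀ (by linarith)]; nlinarith
    have h4 : Real.sqrt (π / ((4 * π * y - 1) / 2)) ≤ 2 := by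
      calc Real.sqrt (π / ((4 * π * y - 1) / 2)) ≤ Real.sqrt 4 := Real.sqrt_le_sqrt this
        _ = 2 := by rw [show (4:ℝ) = 2 ^ 2 by norm_num, Real.sqrt_sq (by norm_num)]
    linarith
  have hK0' : besselK 0 (4 * π * y) ≤ Real.exp (-(4 * π * y)) := by
    refine hK0.trans ?_
    have h := Real.exp_pos (-(4 * π * y))
    calc Real.exp (-(4 * π * y)) * (Real.sqrt (π / (4 * π * y / 2)) / 2)
        ≤ Real.exp (-(4 * π * y)) * 1 := mul_le_mul_of_nonneg_left hb0 h.le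
      _ = _ := mul_one _
  have hK1' : besselK 1 (4 * π * y) ≤ Real.exp 1 * Real.exp (-(4 * π * y)) := by
    refine hK1.trans ?_
    rw [show (1 : ℝ) - 4 * π * y = 1 + -(4 * π * y) by ring, Real.exp_add]
    have h := (Real.exp_pos (-(4 * π * y))).le
    calc Real.exp 1 * Real.exp (-(4 * π * y)) * (Real.sqrt (π / ((4 * π * y - 1) / 2)) / 2)
        ≤ Real.exp 1 * Real.exp (-(4 * π * y)) * 1 :=
          mul_le_mul_of_nonneg_left hb1 (by positivity)
      _ = _ := mul_one _
  rw [abs_le]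
  unfold psiFn
  constructor
  · have h1 : -(6 / π) * y * besselK 1 (4 * π * y)
        ≥ -(6 / π) * y * (Real.exp 1 * Real.exp (-(4 * π * y))) := by
      have := mul_le_mul_of_nonneg_left hK1' (by positivity : (0:ℝ) ≤ 6 / π * y)
      nlinarith
    have h2 : (0:ℝ) ≤ 24 * y ^ 2 * besselK 0 (4 * π * y) := by positivity
    have : -(6 / π) * y * (Real.exp 1 * Real.exp (-(4 * π * y)))
        = -(6 * Real.exp 1 / π * y * Real.exp (-(4 * π * y))) := by ring
    nlinarith [mul_nonneg (mul_nonneg (by norm_num : (0:ℝ) ≤ 24) (sq_nonneg y))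
      (Real.exp_nonneg (-(4 * π * y)))]
  · have h1 : -(6 / π) * y * besselK 1 (4 * π * y) ≤ 0 := by
      have : (0:ℝ) ≤ 6 / π * y * besselK 1 (4 * π * y) := by positivity
      nlinarith
    have h2 : 24 * y ^ 2 * besselK 0 (4 * π * y) ≤ 24 * y ^ 2 * Real.exp (-(4 * π * y)) :=
      mul_le_mul_of_nonneg_left hK0' (by positivity)
    have h3 : (0:ℝ) ≤ 6 * Real.exp 1 / π * y * Real.exp (-(4 * π * y)) := by positivity
    nlinarith

lemma sq_le_four_pow (d : ℕ) : ((d:ℝ) + 1) ^ 2 ≤ 4 ^ d := by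
  induction d with
  | zero => norm_num
  | succ n ih =>
    have hn : (0:ℝ) ≤ n := n.cast_nonneg
    push_cast
    push_cast at ih
    rw [show (4:ℝ) ^ (n + 1) = 4 ^ n * 4 from pow_succ 4 n]
    nlinarith

theorem psi_sum_bound (x : ℝ) (hx : (1 : ℝ) / 2 ≤ x) :
    ∑' d : ℕ, psiFn ((d + 1) * x) ≤
      9 * x ^ ((3 : ℝ) / 2) * Real.exp (-4 * Real.pi * x) := by
  have hx0 : 0 < x := by linarith
  have hπ : (0:ℝ) < π := Real.pi_pos
  set t : ℝ := Real.exp (-(4 * π * x)) with ht_def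
  have ht0 : 0 < t := Real.exp_pos _
  -- t ≤ 1/300
  have ht_small : t ≤ 1 / 300 := by
    have h6 : (6:ℝ) ≤ 4 * π * x := by nlinarith [Real.pi_gt_three]
    have : t ≤ Real.exp (-(6:ℝ)) := by
      rw [ht_def, Real.exp_le_exp]; linarith
    refine this.trans ?_
    rw [Real.exp_neg]
    rw [show ((6:ℝ)) = ((6:ℕ):ℝ) * 1 by norm_num, Real.exp_nat_mul]
    have he : (2.7:ℝ) ≤ Real.exp 1 := by nlinarith [Real.exp_one_gt_d9]
    have h300 : (300:ℝ) ≤ Real.exp 1 ^ 6 := by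
      have h1 : (2.7:ℝ) ^ 6 ≤ Real.exp 1 ^ 6 := pow_le_pow_left₀ (by norm_num) he 6
      have h2 : (300:ℝ) ≤ (2.7:ℝ) ^ 6 := by norm_num
      linarith
    rw [inv_le_iff_one_le_mul₀ (by positivity)]
    nlinarith
  have hr1 : 4 * t < 1 := by linarith
  have hr0 : (0:ℝ) ≤ 4 * t := by positivity
  have hs2 : Real.sqrt 2 ^ 2 = 2 := Real.sq_sqrt (by norm_num)
  have hs20 : 0 < Real.sqrt 2 := Real.sqrt_pos.2 (by norm_num)
  have hsx0 : 0 < Real.sqrt x := Real.sqrt_pos.2 hx0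
  have hsx : Real.sqrt x ^ 2 = x := Real.sq_sqrt hx0.le
  set A : ℝ := 6 * Real.sqrt 2 * (x * Real.sqrt x) * t with hA_def
  have hA0 : 0 ≤ A := by positivity
  -- facts about each y_d
  have hyd : ∀ d : ℕ, (1:ℝ)/2 ≤ ((d:ℝ) + 1) * x := by
    intro d
    have : (1:ℝ) ≤ (d:ℝ) + 1 := by have := Nat.cast_nonneg (α := ℝ) d; linarith
    nlinarith
  have hexp_pow : ∀ d : ℕ, Real.exp (-(4 * π * (((d:ℝ) + 1) * x))) = t * t ^ d := by
    intro d
    rw [ht_def, ← Real.exp_nat_mul, ← Real.exp_add]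
    congr 1
    push_cast
    ring
  -- per-term upper bound
  have hterm : ∀ d : ℕ, psiFn (((d:ℝ) + 1) * x) ≤ A * (4 * t) ^ d := by
    intro d
    refine (psiFn_le _ (hyd d)).trans ?_
    have hd1 : (0:ℝ) ≤ (d:ℝ) + 1 := by positivity
    rw [Real.sqrt_mul hd1, hexp_pow d]
    have hsd : Real.sqrt ((d:ℝ) + 1) ≤ (d:ℝ) + 1 := by
      calc Real.sqrt ((d:ℝ) + 1) ≤ Real.sqrt (((d:ℝ) + 1) ^ 2) :=
            Real.sqrt_le_sqrt (by nlinarith)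
        _ = (d:ℝ) + 1 := Real.sqrt_sq hd1
    have hkey : ((d:ℝ) + 1) * Real.sqrt ((d:ℝ) + 1) ≤ 4 ^ d := by
      calc ((d:ℝ) + 1) * Real.sqrt ((d:ℝ) + 1) ≤ ((d:ℝ) + 1) * ((d:ℝ) + 1) :=
            mul_le_mul_of_nonneg_left hsd hd1
        _ = ((d:ℝ) + 1) ^ 2 := by ring
        _ ≤ 4 ^ d := sq_le_four_pow d
    calc 6 * Real.sqrt 2 * (((d:ℝ) + 1) * x * (Real.sqrt ((d:ℝ) + 1) * Real.sqrt x))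
          * (t * t ^ d)
        = (6 * Real.sqrt 2 * (x * Real.sqrt x) * t)
            * ((((d:ℝ) + 1) * Real.sqrt ((d:ℝ) + 1)) * t ^ d) := by ring
      _ ≤ (6 * Real.sqrt 2 * (x * Real.sqrt x) * t) * ((4:ℝ) ^ d * t ^ d) := by
          refine mul_le_mul_of_nonneg_left ?_ (by positivity)
          exact mul_le_mul_of_nonneg_right hkey (by positivity)
      _ = A * (4 * t) ^ d := by rw [mul_pow]
  -- summability of the series
  have hgsum : Summable (fun d : ℕ => A * (4 * t) ^ d) :=
    (summable_geometric_of_lt_one hr0 hr1).mul_left A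
  have hfsum : Summable (fun d : ℕ => psiFn (((d:ℝ) + 1) * x)) := by
    refine Summable.of_norm_bounded
      (g := fun d : ℕ => (6 * Real.exp 1 / π * x + 24 * x ^ 2) * t * (4 * t) ^ d)
      (((summable_geometric_of_lt_one hr0 hr1).mul_left _)) (fun d => ?_)
    rw [Real.norm_eq_abs]
    refine (abs_psiFn_le _ (hyd d)).trans ?_
    rw [hexp_pow d]
    have hd1 : (1:ℝ) ≤ (d:ℝ) + 1 := by have := Nat.cast_nonneg (α := ℝ) d; linarith
    have h4 : ((d:ℝ) + 1) ^ 2 ≤ 4 ^ d := sq_le_four_pow d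
    have hy2 : (((d:ℝ) + 1) * x) ^ 2 = ((d:ℝ) + 1) ^ 2 * x ^ 2 := by ring
    have hcoef : 6 * Real.exp 1 / π * (((d:ℝ) + 1) * x) + 24 * (((d:ℝ) + 1) * x) ^ 2
        ≤ (6 * Real.exp 1 / π * x + 24 * x ^ 2) * (4:ℝ) ^ d := by
      have h1 : (d:ℝ) + 1 ≤ ((d:ℝ) + 1) ^ 2 := by nlinarith
      have hc1 : (0:ℝ) ≤ 6 * Real.exp 1 / π * x := by positivity
      have hc2 : (0:ℝ) ≤ 24 * x ^ 2 := by positivity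
      calc 6 * Real.exp 1 / π * (((d:ℝ) + 1) * x) + 24 * (((d:ℝ) + 1) * x) ^ 2
          = 6 * Real.exp 1 / π * x * ((d:ℝ) + 1) + 24 * x ^ 2 * ((d:ℝ) + 1) ^ 2 := by ring
        _ ≤ 6 * Real.exp 1 / π * x * (4:ℝ) ^ d + 24 * x ^ 2 * (4:ℝ) ^ d := by
            gcongr
            · exact h1.trans h4
        _ = (6 * Real.exp 1 / π * x + 24 * x ^ 2) * (4:ℝ) ^ d := by ring
    calc (6 * Real.exp 1 / π * (((d:ℝ) + 1) * x) + 24 * (((d:ℝ) + 1) * x) ^ 2) * (t * t ^ d)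
        ≤ ((6 * Real.exp 1 / π * x + 24 * x ^ 2) * (4:ℝ) ^ d) * (t * t ^ d) :=
          mul_le_mul_of_nonneg_right hcoef (by positivity)
      _ = (6 * Real.exp 1 / π * x + 24 * x ^ 2) * t * (4 * t) ^ d := by
          rw [mul_pow]; ring
  -- combine
  have hsum_le : ∑' d : ℕ, psiFn (((d:ℝ) + 1) * x) ≤ A * (1 - 4 * t)⁻¹ := by
    calc ∑' d : ℕ, psiFn (((d:ℝ) + 1) * x) ≤ ∑' d : ℕ, A * (4 * t) ^ d :=
          Summable.tsum_le_tsum hterm hfsum hgsum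
      _ = A * (1 - 4 * t)⁻¹ := by
          rw [tsum_mul_left, tsum_geometric_of_lt_one hr0 hr1]
  refine hsum_le.trans ?_
  have hx32 : x ^ ((3:ℝ)/2) = x * Real.sqrt x := by
    rw [show (3:ℝ)/2 = 1 + 1/2 by norm_num, Real.rpow_add hx0, Real.rpow_one,
      ← Real.sqrt_eq_rpow]
  have hexp_eq : Real.exp (-4 * π * x) = t := by
    rw [ht_def]; ring_nf
  rw [hx32, hexp_eq, hA_def]
  rw [mul_inv_le_iff₀ (by linarith : (0:ℝ) < 1 - 4 * t)]
  have hsqrt2_le : Real.sqrt 2 ≤ 1.415 := by nlinarith [Real.sqrt_nonneg 2]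
  have hP : (0:ℝ) ≤ x * Real.sqrt x * t := by positivity
  nlinarith [mul_nonneg hP (by nlinarith : (0:ℝ) ≤ 9 * (1 - 4 * t) - 6 * Real.sqrt 2)]
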